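/- Let C^□ be a binary box code for a graph G on M vertices (with no isolated vertices) with pairwise protected distance ≥ d along edges, protected length η, average length n, and let r = ⌊(d−1)/2⌋ ≥ 1. Then α(G)/M ≥ 2^{−n}(n/r)^r, and consequently n ≥ log₂(M/α(G)) + r·log₂(2·log₂(M/α(G))/(d−1)). -/

import Mathlib

/-- Protected distance between two binary words over `Option (Fin 2)`. -/
def pdist {η : ℕ} (w w' : Fin η → Option (Fin 2)) : ℕ :=
  (Finset.univ.filter (fun i => ∃ a b : Fin 2, w i = some a ∧ w' i = some b ∧ a ≠ b)).card

/-- Number of protected coordinates of a word. -/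
def plen {η : ℕ} (w : Fin η → Option (Fin 2)) : ℕ :=
  (Finset.univ.filter (fun i => (w i).isSome)).card

/-- A finset of vertices is independent in `G`. -/
def IsIndepSet {V : Type*} (G : SimpleGraph V) (s : Finset V) : Prop :=
  ∀ u ∈ s, ∀ v ∈ s, u ≠ v → ¬ G.Adj u v

/-- The independence number of `G`. -/
noncomputable def indepNum {V : Type*} [Fintype V] (G : SimpleGraph V) : ℕ :=
  sSup {n | ∃ s : Finset V, IsIndepSet G s ∧ s.card = n}

section Aux
open Finset Nat Real

/-- box distance from a full word to a partial word -/
def bdist {η : ℕ} (w : Fin η → Fin 2) (x : Fin η → Option (Fin 2)) : ℕ :=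
  (Finset.univ.filter (fun i => ∃ a : Fin 2, x i = some a ∧ w i ≠ a)).card

lemma card_le_indepNum {V : Type*} [Fintype V] [DecidableEq V] {G : SimpleGraph V}
    {s : Finset V} (hs : IsIndepSet G s) : s.card ≤ indepNum G := by
  apply le_csSup
  · exact ⟨Fintype.card V, by rintro m ⟨t, -, rfl⟩; exact t.card_le_univ⟩
  · exact ⟨s, hs, rfl⟩

lemma one_le_indepNum {V : Type*} [Fintype V] [DecidableEq V] [Nonempty V]
    (G : SimpleGraph V) : 1 ≤ indepNum G := by
  have := card_le_indepNum (G := G) (s := {Classical.arbitrary V})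
    (by intro u hu v hv huv; simp_all)
  simpa using this

lemma indepNum_le_card {V : Type*} [Fintype V] (G : SimpleGraph V) :
    indepNum G ≤ Fintype.card V := by
  have hne : {n | ∃ s : Finset V, IsIndepSet G s ∧ s.card = n}.Nonempty :=
    ⟨0, ∅, by intro u hu; simp_all, by simp⟩
  apply csSup_le hne
  rintro m ⟨t, -, rfl⟩; exact t.card_le_univ

lemma pdist_triangle {η : ℕ} (w : Fin η → Fin 2) (x y : Fin η → Option (Fin 2)) :
    pdist x y ≤ bdist w x + bdist w y := by
  classical
  rw [pdist, bdist, bdist, ← card_union_add_card_inter]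
  apply le_trans _ (Nat.le_add_right _ _)
  apply card_le_card
  intro i hi
  simp only [mem_filter, mem_union, mem_univ, true_and] at hi ⊢
  obtain ⟨a, b, hxa, hyb, hab⟩ := hi
  by_cases h : w i = a
  · exact Or.inr ⟨b, hyb, h ▸ hab⟩
  · exact Or.inl ⟨a, hxa, h⟩

lemma pdist_le_plen {η : ℕ} (x y : Fin η → Option (Fin 2)) : pdist x y ≤ plen x := by
  apply card_le_card
  intro i hi
  simp only [mem_filter, mem_univ, true_and] at hi ⊢
  obtain ⟨a, b, hxa, -, -⟩ := hi
  simp [hxa]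

lemma fin2_succ_ne (a : Fin 2) : a + 1 ≠ a := by fin_cases a <;> decide

lemma pow_le_pow_mul_choose (k r : ℕ) (h : r ≤ k) : k ^ r ≤ r ^ r * k.choose r := by
  rcases Nat.eq_zero_or_pos r with rfl | hr
  · simp
  have key : k ^ r * r ! ≤ k.descFactorial r * r ^ r := by
    have h1 : k ^ r * r ! = ∏ i ∈ range r, (k * (r - i)) := by
      rw [prod_mul_distrib, prod_const, card_range]
      congr 1
      rw [← Finset.prod_range_add_one_eq_factorial]
      rw [← prod_range_reflect (fun j => j + 1) r]
      apply prod_congr rfl; intro i hi; simp at hi; omega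
    have h2 : k.descFactorial r * r ^ r = ∏ i ∈ range r, ((k - i) * r) := by
      rw [prod_mul_distrib, prod_const, card_range, Nat.descFactorial_eq_prod_range]
    rw [h1, h2]
    apply prod_le_prod'
    intro i hi
    simp only [mem_range] at hi
    have h3 : i * r ≤ k * i := by
      calc i * r ≤ i * k := Nat.mul_le_mul_left i h
      _ = k * i := Nat.mul_comm i k
    rw [Nat.mul_sub, Nat.sub_mul]
    omega
  rw [Nat.descFactorial_eq_factorial_mul_choose k r] at key
  refine Nat.le_of_mul_le_mul_right ?_ (Nat.factorial_pos r)
  calc k ^ r * r ! ≤ r ! * k.choose r * r ^ r := key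
  _ = r ^ r * k.choose r * r ! := by ring

lemma count_ball {η r : ℕ} (x : Fin η → Option (Fin 2)) :
    (plen x).choose r * 2 ^ (η - plen x) ≤
      (Finset.univ.filter (fun w : Fin η → Fin 2 => bdist w x ≤ r)).card := by
  classical
  set P : Finset (Fin η) := Finset.univ.filter (fun i => (x i).isSome) with hP
  have hPcard : P.card = plen x := rfl
  set D : Finset (Finset (Fin η) × (Fin η → Fin 2)) :=
    (P.powersetCard r) ×ˢ (Fintype.piFinset
      (fun i : Fin η => if i ∈ P then ({0} : Finset (Fin 2)) else Finset.univ)) with hD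
  have hDcard : D.card = (plen x).choose r * 2 ^ (η - plen x) := by
    rw [hD, card_product, card_powersetCard, hPcard]
    congr 1
    rw [Fintype.card_piFinset]
    have : ∀ i : Fin η, (if i ∈ P then ({0} : Finset (Fin 2)) else Finset.univ).card
        = if i ∈ P then 1 else 2 := by
      intro i; split <;> simp
    simp_rw [this]
    rw [Finset.prod_ite, Finset.prod_const, Finset.prod_const, one_pow, one_mul]
    congr 1
    have : Finset.univ.filter (fun i : Fin η => ¬ i ∈ P) = Pᶜ := by
      ext i; simp
    rw [this, card_compl, Fintype.card_fin, hPcard]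
  set Phi : Finset (Fin η) × (Fin η → Fin 2) → (Fin η → Fin 2) :=
    fun p i => (x i).elim (p.2 i) (fun a => if i ∈ p.1 then a + 1 else a) with hPh
  rw [← hDcard]
  apply Finset.card_le_card_of_injOn Phi
  · -- maps to
    rintro ⟨S, g⟩ hp
    simp only [hD, Finset.mem_coe, mem_product, mem_powersetCard] at hp
    obtain ⟨⟨hSP, hScard⟩, hg⟩ := hp
    simp only [Finset.mem_coe, mem_filter, mem_univ, true_and]
    have : Finset.univ.filter (fun i => ∃ a : Fin 2, x i = some a ∧ Phi (S, g) i ≠ a) = S := by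
      ext i
      simp only [mem_filter, mem_univ, true_and]
      constructor
      · rintro ⟨a, hxa, hne⟩
        by_contra hiS
        apply hne
        simp [hPh, hxa, hiS]
      · intro hiS
        have hiP := hSP hiS
        simp only [hP, mem_filter, mem_univ, true_and] at hiP
        obtain ⟨a, hxa⟩ := Option.isSome_iff_exists.mp hiP
        exact ⟨a, hxa, by simp [hPh, hxa, hiS, fin2_succ_ne a]⟩
    rw [bdist, this, hScard]
  · -- injective
    rintro ⟨S, g⟩ hp ⟨S', g'⟩ hq heq
    simp only [hD, Finset.mem_coe, mem_product, mem_powersetCard, Fintype.mem_piFinset] at hp hq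
    obtain ⟨⟨hSP, hScard⟩, hg⟩ := hp
    obtain ⟨⟨hSP', hScard'⟩, hg'⟩ := hq
    have hfun : ∀ i, Phi (S, g) i = Phi (S', g') i := fun i => congrFun heq i
    have hSS : S = S' := by
      ext i
      constructor
      · intro hiS
        have hiP := hSP hiS
        simp only [hP, mem_filter, mem_univ, true_and] at hiP
        obtain ⟨a, hxa⟩ := Option.isSome_iff_exists.mp hiP
        have := hfun i
        simp only [hPh, hxa, Option.elim, hiS, if_true] at this
        by_contra hiS'
        rw [if_neg hiS'] at this
        exact fin2_succ_ne a this
      · intro hiS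
        have hiP := hSP' hiS
        simp only [hP, mem_filter, mem_univ, true_and] at hiP
        obtain ⟨a, hxa⟩ := Option.isSome_iff_exists.mp hiP
        have := hfun i
        simp only [hPh, hxa, Option.elim, hiS, if_true] at this
        by_contra hiS'
        rw [if_neg hiS'] at this
        exact fin2_succ_ne a this.symm
    have hgg : g = g' := by
      funext i
      by_cases hiP : i ∈ P
      · have h1 := hg i; have h2 := hg' i
        rw [if_pos hiP] at h1 h2
        simp only [mem_singleton] at h1 h2
        rw [h1, h2]
      · have hx : x i = none := by
          simp only [hP, mem_filter, mem_univ, true_and] at hiP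
          exact Option.not_isSome_iff_eq_none.mp hiP
        have := hfun i
        simpa [hPh, hx] using this
    rw [Prod.mk.injEq]; exact ⟨hSS, hgg⟩

noncomputable def Efun (r : ℕ) : ℝ → ℝ := fun x => Real.exp (-(Real.log 2) * x) * (x / r) ^ r

noncomputable def Efun1 (r : ℕ) : ℝ → ℝ := fun x =>
  Real.exp (-(Real.log 2) * x) *
    (-(Real.log 2) * (x / r) ^ r + (x / r) ^ (r - 1))

noncomputable def Efun2 (r : ℕ) : ℝ → ℝ := fun x =>
  Real.exp (-(Real.log 2) * x) *
    (Real.log 2 * Real.log 2 * (x / r) ^ r - 2 * Real.log 2 * (x / r) ^ (r - 1)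
      + ((r : ℝ) - 1) / r * (x / r) ^ (r - 1 - 1))

lemma hasDerivAt_Efun (r : ℕ) (hr : 1 ≤ r) (x : ℝ) : HasDerivAt (Efun r) (Efun1 r x) x := by
  have hr0 : (r : ℝ) ≠ 0 := Nat.cast_ne_zero.mpr (by omega)
  have hg : HasDerivAt (fun x : ℝ => Real.exp (-(Real.log 2) * x))
      (Real.exp (-(Real.log 2) * x) * (-(Real.log 2))) x :=
    by simpa using ((hasDerivAt_id x).const_mul (-(Real.log 2))).exp
  have hp : HasDerivAt (fun x : ℝ => (x / r) ^ r)
      ((r : ℝ) * (x / r) ^ (r - 1) * (1 / r)) x := by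
    simpa using ((hasDerivAt_id x).div_const (r : ℝ)).fun_pow r
  have := hg.fun_mul hp
  refine this.congr_deriv ?_
  simp only [Efun1]
  field_simp
lemma hasDerivAt_Efun1 (r : ℕ) (hr : 1 ≤ r) (x : ℝ) : HasDerivAt (Efun1 r) (Efun2 r x) x := by
  have hr0 : (r : ℝ) ≠ 0 := Nat.cast_ne_zero.mpr (by omega)
  have hg : HasDerivAt (fun x : ℝ => Real.exp (-(Real.log 2) * x))
      (Real.exp (-(Real.log 2) * x) * (-(Real.log 2))) x :=
    by simpa using ((hasDerivAt_id x).const_mul (-(Real.log 2))).exp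
  have hp : HasDerivAt (fun x : ℝ => (x / r) ^ r)
      ((r : ℝ) * (x / r) ^ (r - 1) * (1 / r)) x := by
    simpa using ((hasDerivAt_id x).div_const (r : ℝ)).fun_pow r
  have hq : HasDerivAt (fun x : ℝ => (x / r) ^ (r - 1))
      (((r : ℝ) - 1) * (x / r) ^ (r - 1 - 1) * (1 / r)) x := by
    have := ((hasDerivAt_id x).div_const (r : ℝ)).fun_pow (r - 1)
    simp only [id] at this ⊢
    refine this.congr_deriv ?_
    · push_cast [Nat.cast_sub hr]; ring
  have hA : HasDerivAt (fun x : ℝ => -(Real.log 2) * (x / r) ^ r + (x / r) ^ (r - 1))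
      (-(Real.log 2) * ((r : ℝ) * (x / r) ^ (r - 1) * (1 / r))
        + ((r : ℝ) - 1) * (x / r) ^ (r - 1 - 1) * (1 / r)) x :=
    (hp.const_mul _).add hq
  have := hg.fun_mul hA
  refine this.congr_deriv ?_
  simp only [Efun2]
  field_simp
  ring

lemma Efun2_nonneg (r : ℕ) (hr : 1 ≤ r) {x : ℝ} (hx : 2 * (r : ℝ) + 1 ≤ x) :
    0 ≤ Efun2 r x := by
  have hL : (0.6931471803 : ℝ) < Real.log 2 := Real.log_two_gt_d9
  have hL0 : (0 : ℝ) ≤ Real.log 2 := by linarith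
  have hr0 : (0 : ℝ) < r := by exact_mod_cast Nat.pos_of_ne_zero (by omega)
  have hx0 : (0 : ℝ) < x := by nlinarith
  apply mul_nonneg (Real.exp_nonneg _)
  rcases Nat.lt_or_ge r 2 with h2 | h2
  · -- r = 1
    interval_cases r
    push_cast at hx
    norm_num
    nlinarith [mul_le_mul_of_nonneg_left hx hL0]
  · -- r ≥ 2
    have hy0 : (0 : ℝ) < x / r := by positivity
    have e1 : (x / r) ^ r = (x / r) ^ (r - 2) * (x / r) ^ 2 := by
      rw [← pow_add]; congr 1; omega
    have e2 : (x / r) ^ (r - 1) = (x / r) ^ (r - 2) * (x / r) := by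
      rw [← pow_succ]; congr 1; omega
    have e3 : r - 1 - 1 = r - 2 := by omega
    rw [e1, e2, e3]
    have hr2 : (2 : ℝ) ≤ r := by exact_mod_cast h2
    have h1 : 0 ≤ Real.log 2 * Real.log 2 * x ^ 2 - 2 * Real.log 2 * (r : ℝ) * x
        + ((r : ℝ) - 1) * r := by
      have t1 : 0.3862 * (r : ℝ) + 0.6931 ≤ Real.log 2 * x - r := by
        nlinarith [mul_le_mul_of_nonneg_left hx hL0]
      have t2 : (0.3862 * (r : ℝ) + 0.6931) ^ 2 ≤ (Real.log 2 * x - r) ^ 2 :=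
        pow_le_pow_left₀ (by positivity) t1 2
      have t3 : (r : ℝ) ≤ (0.3862 * (r : ℝ) + 0.6931) ^ 2 := by
        nlinarith [sq_nonneg ((r : ℝ) - 1.5576)]
      nlinarith [t2, t3]
    have key : 0 ≤ Real.log 2 * Real.log 2 * (x / r) ^ 2 - 2 * Real.log 2 * (x / r)
        + ((r : ℝ) - 1) / r := by
      have heq : Real.log 2 * Real.log 2 * (x / r) ^ 2 - 2 * Real.log 2 * (x / r)
          + ((r : ℝ) - 1) / r
          = (Real.log 2 * Real.log 2 * x ^ 2 - 2 * Real.log 2 * (r : ℝ) * x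
            + ((r : ℝ) - 1) * r) / ((r : ℝ) * r) := by
        field_simp
      rw [heq]
      exact div_nonneg h1 (by positivity)
    nlinarith [pow_nonneg (le_of_lt hy0) (r - 2), key]

lemma convexOn_Efun (r : ℕ) (hr : 1 ≤ r) :
    ConvexOn ℝ (Set.Ici (2 * (r : ℝ) + 1)) (Efun r) := by
  have hd1 : ∀ x : ℝ, HasDerivAt (Efun r) (Efun1 r x) x := hasDerivAt_Efun r hr
  have hd2 : ∀ x : ℝ, HasDerivAt (Efun1 r) (Efun2 r x) x := hasDerivAt_Efun1 r hr
  have hderiv : deriv (Efun r) = Efun1 r := funext fun x => (hd1 x).deriv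
  apply convexOn_of_deriv2_nonneg (convex_Ici _)
  · exact Continuous.continuousOn (by
      have : Differentiable ℝ (Efun r) := fun x => (hd1 x).differentiableAt
      exact this.continuous)
  · intro x hx
    exact ((hd1 x).differentiableAt).differentiableWithinAt
  · intro x hx
    rw [hderiv]
    exact ((hd2 x).differentiableAt).differentiableWithinAt
  · intro x hx
    have : deriv (deriv (Efun r)) x = Efun2 r x := by
      rw [hderiv]; exact (hd2 x).deriv
    rw [show deriv^[2] (Efun r) x = deriv (deriv (Efun r)) x by
      rw [Function.iterate_succ, Function.iterate_one]; rfl, this]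
    rw [interior_Ici] at hx
    exact Efun2_nonneg r hr (le_of_lt hx)

end Aux

open Finset Nat Real in
/-- for a binary box code on the vertices of a graph `G` without
isolated vertices, with protected distance `≥ d` along edges, average length `n`, and
`r = ⌊(d−1)/2⌋ ≥ 1`, we have `α(G)/M ≥ 2^(−n)·(n/r)^r`, and consequently
`n ≥ log₂(M/α(G)) + r·log₂(2·log₂(M/α(G))/(d−1))`. -/
theorem box_code_graph_lower_bound (M η d r : ℕ) (hM : 1 ≤ M)
    (G : SimpleGraph (Fin M)) (hiso : ∀ u : Fin M, ∃ v, G.Adj u v)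
    (c : Fin M → Fin η → Option (Fin 2))
    (hc : ∀ u v : Fin M, G.Adj u v → d ≤ pdist (c u) (c v))
    (hr : r = (d - 1) / 2) (hr1 : 1 ≤ r)
    (n : ℝ) (hn : n = (∑ u, (plen (c u) : ℝ)) / M) :
    (2 : ℝ) ^ (-n) * (n / r) ^ r ≤ (indepNum G : ℝ) / M ∧
    Real.logb 2 ((M : ℝ) / indepNum G) +
        r * Real.logb 2 (2 * Real.logb 2 ((M : ℝ) / indepNum G) / (d - 1)) ≤ n := by
  classical
  have hd3 : 2 * r + 1 ≤ d := by omega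
  have hMpos : (0 : ℝ) < M := by exact_mod_cast hM
  have hrR : (0 : ℝ) < r := by exact_mod_cast hr1
  have hplen : ∀ u, d ≤ plen (c u) := fun u => by
    obtain ⟨v, hv⟩ := hiso u
    exact le_trans (hc u v hv) (pdist_le_plen _ _)
  have hplenη : ∀ u, plen (c u) ≤ η := fun u =>
    le_trans (Finset.card_le_univ _) (by simp)
  have : Nonempty (Fin M) := ⟨⟨0, hM⟩⟩
  have hα1 : 1 ≤ indepNum G := one_le_indepNum G
  have hαM : indepNum G ≤ M := le_trans (indepNum_le_card G) (by simp)
  have hα1R : (1 : ℝ) ≤ (indepNum G : ℝ) := by exact_mod_cast hα1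
  have hαMR : (indepNum G : ℝ) ≤ M := by exact_mod_cast hαM
  -- counting inequality
  have hcount : ∑ u, ((plen (c u)).choose r * 2 ^ (η - plen (c u))) ≤ indepNum G * 2 ^ η := by
    have h1 : ∀ u : Fin M, (plen (c u)).choose r * 2 ^ (η - plen (c u)) ≤
        (Finset.univ.filter (fun w : Fin η → Fin 2 => bdist w (c u) ≤ r)).card :=
      fun u => count_ball (c u)
    have h2 : ∑ u, (Finset.univ.filter fun w : Fin η → Fin 2 => bdist w (c u) ≤ r).card
        = ∑ w : Fin η → Fin 2, (Finset.univ.filter fun u => bdist w (c u) ≤ r).card := by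
      simp_rw [Finset.card_filter]
      exact Finset.sum_comm
    have h3 : ∀ w : Fin η → Fin 2,
        (Finset.univ.filter fun u => bdist w (c u) ≤ r).card ≤ indepNum G := by
      intro w
      apply card_le_indepNum
      intro u hu v hv huv hadj
      simp only [mem_filter, mem_univ, true_and] at hu hv
      have ht := pdist_triangle w (c u) (c v)
      have hd := hc u v hadj
      omega
    calc ∑ u, ((plen (c u)).choose r * 2 ^ (η - plen (c u)))
        ≤ ∑ u, (Finset.univ.filter fun w : Fin η → Fin 2 => bdist w (c u) ≤ r).card :=
          Finset.sum_le_sum fun u _ => h1 u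
      _ = ∑ w : Fin η → Fin 2, (Finset.univ.filter fun u => bdist w (c u) ≤ r).card := h2
      _ ≤ ∑ _w : Fin η → Fin 2, indepNum G := Finset.sum_le_sum fun w _ => h3 w
      _ = indepNum G * 2 ^ η := by
          rw [Finset.sum_const, Finset.card_univ]
          simp [Fintype.card_fun, mul_comm]
  -- per-vertex real bound
  have hA : ∀ u : Fin M, Efun r (plen (c u)) ≤
      (((plen (c u)).choose r * 2 ^ (η - plen (c u)) : ℕ) : ℝ) / 2 ^ η := by
    intro u
    set k := plen (c u) with hk
    have hrk : r ≤ k := le_trans (by omega) (hplen u)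
    have hexp : Real.exp (-(Real.log 2) * (k : ℝ)) = ((2 : ℝ) ^ k)⁻¹ := by
      rw [neg_mul, Real.exp_neg]
      congr 1
      rw [← Real.rpow_natCast 2 k, Real.rpow_def_of_pos (by norm_num), mul_comm]
    have hpow : ((k : ℝ) / r) ^ r ≤ (k.choose r : ℝ) := by
      rw [div_pow, div_le_iff₀ (by positivity)]
      have := pow_le_pow_mul_choose k r hrk
      calc ((k : ℝ)) ^ r = ((k ^ r : ℕ) : ℝ) := by push_cast; ring
        _ ≤ ((r ^ r * k.choose r : ℕ) : ℝ) := by exact_mod_cast this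
        _ = (k.choose r : ℝ) * (r : ℝ) ^ r := by push_cast; ring
    have h2k : ((2:ℝ) ^ (η - k)) / 2 ^ η = ((2:ℝ) ^ k)⁻¹ := by
      have he : (2:ℝ) ^ η = 2 ^ (η - k) * 2 ^ k := by
        rw [← pow_add]; congr 1; have := hplenη u; omega
      rw [he, div_mul_eq_div_div, div_self (by positivity), one_div]
    calc Efun r (k : ℝ) = ((2:ℝ) ^ k)⁻¹ * ((k : ℝ) / r) ^ r := by
          rw [Efun, hexp]
      _ ≤ ((2:ℝ) ^ k)⁻¹ * (k.choose r : ℝ) := by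
          apply mul_le_mul_of_nonneg_left hpow (by positivity)
      _ = (((k.choose r * 2 ^ (η - k) : ℕ)) : ℝ) / 2 ^ η := by
          rw [← h2k]; push_cast; ring
  -- Jensen
  have hmem : ∀ u : Fin M, ((plen (c u) : ℝ)) ∈ Set.Ici (2 * (r : ℝ) + 1) := by
    intro u
    simp only [Set.mem_Ici]
    have := hplen u
    have : (d : ℝ) ≤ (plen (c u) : ℝ) := by exact_mod_cast this
    have hd3R : 2 * (r : ℝ) + 1 ≤ (d : ℝ) := by exact_mod_cast hd3
    linarith
  have hsum_w : ∑ _u : Fin M, (1 / M : ℝ) = 1 := by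
    rw [Finset.sum_const, Finset.card_univ, Fintype.card_fin, nsmul_eq_mul]
    field_simp
  have hjensen : Efun r n ≤ ∑ u : Fin M, (1 / M : ℝ) * Efun r (plen (c u)) := by
    have := (convexOn_Efun r hr1).map_sum_le
      (t := Finset.univ) (w := fun _ : Fin M => (1 / M : ℝ))
      (p := fun u : Fin M => ((plen (c u) : ℝ)))
      (fun u _ => by positivity) hsum_w (fun u _ => hmem u)
    have hnn : n = ∑ u : Fin M, (1 / M : ℝ) • ((plen (c u) : ℝ)) := by
      simp only [smul_eq_mul]
      rw [hn, Finset.sum_div]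
      apply Finset.sum_congr rfl; intros; ring
    rw [hnn]
    simpa using this
  have hpart1 : (2 : ℝ) ^ (-n) * (n / r) ^ r ≤ (indepNum G : ℝ) / M := by
    have hEn : (2 : ℝ) ^ (-n) * (n / r) ^ r = Efun r n := by
      rw [Efun, Real.rpow_def_of_pos (by norm_num : (0:ℝ) < 2)]
      ring_nf
    rw [hEn]
    refine le_trans hjensen ?_
    have step : ∑ u : Fin M, (1 / M : ℝ) * Efun r (plen (c u))
        ≤ ∑ u : Fin M, (1 / M : ℝ) *
          ((((plen (c u)).choose r * 2 ^ (η - plen (c u)) : ℕ) : ℝ) / 2 ^ η) :=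
      Finset.sum_le_sum fun u _ => mul_le_mul_of_nonneg_left (hA u) (by positivity)
    refine le_trans step ?_
    rw [← Finset.mul_sum, ← Finset.sum_div]
    have hcountR : (∑ u, (((plen (c u)).choose r * 2 ^ (η - plen (c u)) : ℕ) : ℝ))
        ≤ (indepNum G : ℝ) * 2 ^ η := by
      rw [← Nat.cast_sum]
      calc ((∑ u, ((plen (c u)).choose r * 2 ^ (η - plen (c u))) : ℕ) : ℝ)
          ≤ ((indepNum G * 2 ^ η : ℕ) : ℝ) := by exact_mod_cast hcount
        _ = (indepNum G : ℝ) * 2 ^ η := by push_cast; ring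
    calc (1 / M : ℝ) * ((∑ u, (((plen (c u)).choose r * 2 ^ (η - plen (c u)) : ℕ) : ℝ)) / 2 ^ η)
        ≤ (1 / M : ℝ) * (((indepNum G : ℝ) * 2 ^ η) / 2 ^ η) := by
          apply mul_le_mul_of_nonneg_left _ (by positivity)
          exact div_le_div_of_nonneg_right hcountR (by positivity)
        _ = (indepNum G : ℝ) / M := by
          field_simp
  refine ⟨hpart1, ?_⟩
  set A := ((indepNum G : ℝ)) with hAdef
  set L := Real.logb 2 ((M : ℝ) / A) with hLdef
  have hnd : (d : ℝ) ≤ n := by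
    rw [hn, le_div_iff₀ hMpos]
    calc (d:ℝ) * M = ∑ _u : Fin M, (d:ℝ) := by
          rw [Finset.sum_const, Finset.card_univ, Fintype.card_fin, nsmul_eq_mul]; ring
    _ ≤ ∑ u, (plen (c u) : ℝ) := Finset.sum_le_sum fun u _ => by exact_mod_cast hplen u
  have hd3R : 2*(r:ℝ)+1 ≤ (d:ℝ) := by exact_mod_cast hd3
  have hn0 : (0:ℝ) < n := by linarith
  have hnr1 : (1:ℝ) ≤ n / r := by rw [le_div_iff₀ hrR]; linarith
  have hA0 : (0:ℝ) < A := by rw [hAdef]; linarith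
  have hL0 : 0 ≤ L := Real.logb_nonneg one_lt_two
    (by rw [le_div_iff₀ hA0]; simpa using hαMR)
  have hkey : L + r * Real.logb 2 (n / r) ≤ n := by
    have h1 : (0:ℝ) < (2:ℝ) ^ (-n) := Real.rpow_pos_of_pos (by norm_num) _
    have h2 : (0:ℝ) < (n / r) ^ r := pow_pos (by positivity) r
    have hlog := Real.logb_le_logb_of_le one_lt_two (by positivity) hpart1
    rw [Real.logb_mul (ne_of_gt h1) (ne_of_gt h2), Real.logb_pow] at hlog
    have h3 : Real.logb 2 ((2:ℝ) ^ (-n)) = -n := Real.logb_rpow (by norm_num) (by norm_num)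
    have h4 : Real.logb 2 (A / M) = -L := by
      rw [hLdef, ← Real.logb_inv]; congr 1; rw [inv_div]
    rw [h3, h4] at hlog
    linarith
  have hlognr : 0 ≤ Real.logb 2 (n / r) := Real.logb_nonneg one_lt_two hnr1
  have hLn : L ≤ n := by nlinarith
  rcases eq_or_lt_of_le hL0 with hLz | hLpos
  · rw [← hLz]
    rw [show (2:ℝ) * 0 / ((d:ℝ) - 1) = 0 by ring, Real.logb_zero]
    simpa using hn0.le
  · have h2r : 2*(r:ℝ) ≤ (d:ℝ) - 1 := by linarith
    have hdm1 : (0:ℝ) < (d:ℝ) - 1 := by linarith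
    have harg : 2*L/((d:ℝ)-1) ≤ n/r := by
      rw [div_le_div_iff₀ hdm1 hrR]
      nlinarith
    have hmono := Real.logb_le_logb_of_le one_lt_two (by positivity) harg
    have hmul := mul_le_mul_of_nonneg_left hmono hrR.le
    linarith
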